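/- For all complex numbers A, B, C, the characteristic polynomial of the 4×4 complex matrix [[0, B, −A, −C],[B, 0, C, A],[−A, −C, 0, −B],[C, A, −B, 0]] equals ((X − B)² − (A² − C²))·((X + B)² − (A² − C²)). Consequently, for any complex square root s of A² − C², the eigenvalues of this matrix are exactly B + s, B − s, −B + s and −B − s. -/

import Mathlib

open Polynomial

set_option maxHeartbeats 1600000 in
/-- For complex `A`, `B`, `C₀`, the characteristic polynomial of
`[[0, B, −A, −C₀],[B, 0, C₀, A],[−A, −C₀, 0, −B],[C₀, A, −B, 0]]` equals
`((X − B)² − (A² − C₀²))·((X + B)² − (A² − C₀²))`; consequently, for any square root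
`s` of `A² − C₀²`, the eigenvalues (roots of the characteristic polynomial) are
exactly `B + s`, `B − s`, `−B + s`, `−B − s`. -/
theorem charpoly_vortex_street (A B C₀ : ℂ)
    (Mat : Matrix (Fin 4) (Fin 4) ℂ)
    (hMat : Mat = !![0, B, -A, -C₀; B, 0, C₀, A; -A, -C₀, 0, -B; C₀, A, -B, 0]) :
    Mat.charpoly =
      ((X - Polynomial.C B) ^ 2 - Polynomial.C (A ^ 2 - C₀ ^ 2)) *
        ((X + Polynomial.C B) ^ 2 - Polynomial.C (A ^ 2 - C₀ ^ 2)) ∧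
    ∀ s : ℂ, s ^ 2 = A ^ 2 - C₀ ^ 2 →
      ∀ μ : ℂ, Mat.charpoly.IsRoot μ ↔
        (μ = B + s ∨ μ = B - s ∨ μ = -B + s ∨ μ = -B - s) := by
  have hcp : Mat.charpoly =
      ((X - Polynomial.C B) ^ 2 - Polynomial.C (A ^ 2 - C₀ ^ 2)) *
        ((X + Polynomial.C B) ^ 2 - Polynomial.C (A ^ 2 - C₀ ^ 2)) := by
    subst hMat
    rw [Matrix.charpoly, Matrix.det_succ_row_zero]
    simp [Fin.sum_univ_succ, Matrix.det_fin_three, Matrix.charmatrix_apply, Matrix.diagonal,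
      Fin.succAbove]
    ring
  refine ⟨hcp, fun s hs μ => ?_⟩
  rw [hcp]
  simp only [IsRoot, eval_mul, eval_sub, eval_add, eval_pow, eval_X, eval_C, mul_eq_zero,
    sub_eq_zero]
  constructor
  · rintro (h | h)
    · have : (μ - B - s) * (μ - B + s) = 0 := by rw [← hs] at h; ring_nf; linear_combination h
      rcases mul_eq_zero.1 this with h' | h'
      · exact Or.inl (by linear_combination h')
      · exact Or.inr (Or.inl (by linear_combination h'))
    · have : (μ + B - s) * (μ + B + s) = 0 := by rw [← hs] at h; ring_nf; linear_combination h
      rcases mul_eq_zero.1 this with h' | h'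
      · exact Or.inr (Or.inr (Or.inl (by linear_combination h')))
      · exact Or.inr (Or.inr (Or.inr (by linear_combination h')))
  · rintro (rfl | rfl | rfl | rfl)
    · exact Or.inl (by rw [← hs]; ring)
    · exact Or.inl (by rw [← hs]; ring)
    · exact Or.inr (by rw [← hs]; ring)
    · exact Or.inr (by rw [← hs]; ring)
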